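/- arXiv:2305.03728 — 7 statements merged into one kernel-verified Lean document; each statement's English description precedes it below -/
import Mathlib

section
/- Exact error-propagation identity for Goldschmidt division with truncation errors: let A, B be real numbers with B ≠ 0 and Q = A/B. Let (Fᵢ)ᵢ≥₋₁ be any sequence of real numbers with F₋₁ = rec, and let (nᵢ)ᵢ≥₀, (dᵢ)ᵢ≥₀ be real sequences. Define N₋₁ = A, D₋₁ = B, and for i ≥ 0, Nᵢ = Nᵢ₋₁·Fᵢ₋₁ - nᵢ, Dᵢ = Dᵢ₋₁·Fᵢ₋₁ - dᵢ. Then for every k ≥ 0, Nₖ - Q·Dₖ = Σ_{i=0}^{k} (Q·dᵢ - nᵢ)·∏_{j=i}^{k-1} Fⱼ (where the empty product for i = k equals 1). -/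
/-- Exact error-propagation identity for Goldschmidt division with truncation
errors on the numerator and denominator. -/
theorem goldschmidt_error_propagation
    (A B rec : ℝ) (hB : B ≠ 0) (Q : ℝ) (hQ : Q = A / B)
    (F n d N D : ℕ → ℝ)
    (hN0 : N 0 = A * rec - n 0) (hD0 : D 0 = B * rec - d 0)
    (hF0 : F 0 = rec)
    (hN : ∀ i, N (i + 1) = N i * F i - n (i + 1))
    (hD : ∀ i, D (i + 1) = D i * F i - d (i + 1)) :
    ∀ k : ℕ, N k - Q * D k =
      ∑ i ∈ Finset.range (k + 1),
        (Q * d i - n i) * ∏ j ∈ Finset.Ico i k, F j := by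
  have hQB : Q * B = A := by
    rw [hQ]; field_simp
  intro k
  induction k with
  | zero =>
      simp only [zero_add, Finset.range_one, Finset.sum_singleton, Finset.Ico_self,
        Finset.prod_empty, mul_one, hN0, hD0]
      linear_combination (-rec) * hQB
  | succ k ih =>
      rw [hN k, hD k]
      have step : N k * F k - Q * (D k * F k) = (N k - Q * D k) * F k := by ring
      rw [Finset.sum_range_succ]
      have hlast : (Q * d (k + 1) - n (k + 1)) *
          ∏ j ∈ Finset.Ico (k + 1) (k + 1), F j = Q * d (k + 1) - n (k + 1) := by
        simp
      rw [hlast]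
      have hsum : ∑ i ∈ Finset.range (k + 1),
          (Q * d i - n i) * ∏ j ∈ Finset.Ico i (k + 1), F j
          = (∑ i ∈ Finset.range (k + 1),
          (Q * d i - n i) * ∏ j ∈ Finset.Ico i k, F j) * F k := by
        rw [Finset.sum_mul]
        refine Finset.sum_congr rfl fun i hi => ?_
        have hik : i ≤ k := Nat.lt_succ_iff.mp (Finset.mem_range.mp hi)
        rw [Finset.prod_Ico_succ_top hik, mul_assoc]
      rw [hsum, ← ih]
      ring
end

section
/- Numerator-error-only identity after two iterations: let A, B, rec be reals with B ≠ 0, Q = A/B, ε₀ = 1 - B·rec. Suppose N₀ = A·rec - n₀, D₀ = B·rec, F₀ = 2 - D₀, N₁ = N₀·F₀ - n₁, D₁ = D₀·F₀, F₁ = 2 - D₁, N₂ = N₁·F₁ - n₂, where n₀, n₁, n₂ are reals. Then F₀ = 1 + ε₀, F₁ = 1 + ε₀², D₁ = 1 - ε₀², and N₂ = Q·(1 - ε₀⁴) - n₀·F₀·F₁ - n₁·F₁ - n₂. -/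
/-- Numerator-error-only identity after two Goldschmidt iterations. -/
theorem numerator_error_two_iterations
    (A B rec Q ε₀ n₀ n₁ n₂ N₀ D₀ F₀ N₁ D₁ F₁ N₂ : ℝ)
    (hB : B ≠ 0) (hQ : Q = A / B) (hε : ε₀ = 1 - B * rec)
    (hN₀ : N₀ = A * rec - n₀) (hD₀ : D₀ = B * rec)
    (hF₀ : F₀ = 2 - D₀)
    (hN₁ : N₁ = N₀ * F₀ - n₁) (hD₁ : D₁ = D₀ * F₀)
    (hF₁ : F₁ = 2 - D₁)
    (hN₂ : N₂ = N₁ * F₁ - n₂) :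
    F₀ = 1 + ε₀ ∧ F₁ = 1 + ε₀ ^ 2 ∧ D₁ = 1 - ε₀ ^ 2 ∧
      N₂ = Q * (1 - ε₀ ^ 4) - n₀ * F₀ * F₁ - n₁ * F₁ - n₂ := by
  subst hQ hε hN₀ hD₀ hF₀ hN₁ hD₁ hF₁ hN₂
  refine ⟨by ring, by ring, by ring, ?_⟩
  field_simp
  ring
end

section
/- Lower bound under numerator errors only: let A, B, rec be reals with B ≠ 0, Q = A/B > 0, ε₀ = 1 - B·rec with |ε₀| ≤ 2⁻⁶. Suppose N₀ = A·rec - n₀, D₀ = B·rec, F₀ = 2 - D₀, N₁ = N₀·F₀ - n₁, D₁ = D₀·F₀, F₁ = 2 - D₁, N₂ = N₁·F₁ - n₂, where 0 ≤ nᵢ < n for i = 0, 1, 2. Then N₂ - Q > -Q·ε₀⁴ - 4·n. -/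
/-- Lower bound on the final error under numerator truncation errors only. -/
theorem numerator_error_lower_bound
    (A B rec Q ε₀ n n₀ n₁ n₂ N₀ D₀ F₀ N₁ D₁ F₁ N₂ : ℝ)
    (hB : B ≠ 0) (hQ : Q = A / B) (hQpos : 0 < Q)
    (hε : ε₀ = 1 - B * rec) (hε_small : |ε₀| ≤ 2 ^ (-6 : ℤ))
    (hn₀ : 0 ≤ n₀) (hn₀' : n₀ < n)
    (hn₁ : 0 ≤ n₁) (hn₁' : n₁ < n)
    (hn₂ : 0 ≤ n₂) (hn₂' : n₂ < n)
    (hN₀ : N₀ = A * rec - n₀) (hD₀ : D₀ = B * rec)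
    (hF₀ : F₀ = 2 - D₀)
    (hN₁ : N₁ = N₀ * F₀ - n₁) (hD₁ : D₁ = D₀ * F₀)
    (hF₁ : F₁ = 2 - D₁)
    (hN₂ : N₂ = N₁ * F₁ - n₂) :
    N₂ - Q > -Q * ε₀ ^ 4 - 4 * n := by
  have hA : A = Q * B := by rw [hQ, div_mul_cancel₀ A hB]
  have hBr : B * rec = 1 - ε₀ := by linarith [hε]
  have h64 : (2:ℝ) ^ (-6 : ℤ) = 1/64 := by norm_num
  rw [h64] at hε_small
  obtain ⟨he2, he1⟩ := abs_le.mp hε_small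
  have hAr : A * rec = Q * (1 - ε₀) := by rw [hA, mul_assoc, hBr]
  have hN₂' : N₂ = ((Q * (1 - ε₀) - n₀) * (1 + ε₀) - n₁) * (1 + ε₀^2) - n₂ := by
    rw [hN₂, hN₁, hN₀, hF₁, hD₁, hF₀, hD₀, hBr, hAr]; ring
  rw [hN₂']
  have f0 : (1 + ε₀) * (1 + ε₀^2) ≤ 3/2 := by nlinarith [sq_nonneg ε₀, sq_nonneg (ε₀ - 1/64)]
  have f1 : (1:ℝ) + ε₀^2 ≤ 3/2 := by nlinarith
  have h0 : n₀ * ((1 + ε₀) * (1 + ε₀^2)) ≤ n₀ * (3/2) := mul_le_mul_of_nonneg_left f0 hn₀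
  have h1 : n₁ * (1 + ε₀^2) ≤ n₁ * (3/2) := mul_le_mul_of_nonneg_left f1 hn₁
  nlinarith [h0, h1]
end

section
/- Denominator-error-only identity after two iterations: let A, B, rec be reals with B ≠ 0, Q = A/B, ε₀ = 1 - B·rec. Suppose N₀ = A·rec, D₀ = B·rec - d₀, F₀ = 2 - D₀, N₁ = N₀·F₀, D₁ = D₀·F₀ - d₁, F₁ = 2 - D₁, N₂ = N₁·F₁, D₂ = D₁·F₁ - d₂, where d₀, d₁, d₂ are reals. Define ε₀' = ε₀ + d₀, ε₁' = ε₀'² + d₁, ε₂' = ε₁'² + d₂. Then D₀ = 1 - ε₀', F₀ = 1 + ε₀', D₁ = 1 - ε₁', F₁ = 1 + ε₁', D₂ = 1 - ε₂', and N₂ = Q·(1 - ε₂') + Q·d₀·F₀·F₁ + Q·d₁·F₁ + Q·d₂. -/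
/-- Denominator-error-only identity after two Goldschmidt iterations. -/
theorem denominator_error_two_iterations
    (A B rec Q ε₀ d₀ d₁ d₂ N₀ D₀ F₀ N₁ D₁ F₁ N₂ D₂ ε₀' ε₁' ε₂' : ℝ)
    (hB : B ≠ 0) (hQ : Q = A / B) (hε : ε₀ = 1 - B * rec)
    (hN₀ : N₀ = A * rec) (hD₀ : D₀ = B * rec - d₀)
    (hF₀ : F₀ = 2 - D₀)
    (hN₁ : N₁ = N₀ * F₀) (hD₁ : D₁ = D₀ * F₀ - d₁)
    (hF₁ : F₁ = 2 - D₁)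
    (hN₂ : N₂ = N₁ * F₁) (hD₂ : D₂ = D₁ * F₁ - d₂)
    (hε₀' : ε₀' = ε₀ + d₀) (hε₁' : ε₁' = ε₀' ^ 2 + d₁)
    (hε₂' : ε₂' = ε₁' ^ 2 + d₂) :
    D₀ = 1 - ε₀' ∧ F₀ = 1 + ε₀' ∧ D₁ = 1 - ε₁' ∧ F₁ = 1 + ε₁' ∧
      D₂ = 1 - ε₂' ∧
      N₂ = Q * (1 - ε₂') + Q * d₀ * F₀ * F₁ + Q * d₁ * F₁ + Q * d₂ := by
  subst hQ hε hN₀ hD₀ hF₀ hN₁ hD₁ hF₁ hN₂ hD₂ hε₀' hε₁' hε₂'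
  refine ⟨by ring, by ring, by ring, by ring, by ring, ?_⟩
  field_simp
  ring
end

section
/- Upper bound under denominator errors only: let A, B, rec be reals with B ≠ 0 and 0 < Q = A/B < 2. Let ε₀ = 1 - B·rec and suppose N₀ = A·rec, D₀ = B·rec - d₀, F₀ = 2 - D₀, N₁ = N₀·F₀, D₁ = D₀·F₀ - d₁, F₁ = 2 - D₁, N₂ = N₁·F₁, where 0 ≤ dᵢ < d for i = 0, 1 with 0 < d ≤ 2⁻¹², and the modified error ε₀' = ε₀ + d₀ satisfies |ε₀'| ≤ 2⁻⁶. Then N₂ - Q < (2·Q + 1)·d. -/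
/-- Upper bound on the final error under denominator truncation errors only. -/
theorem denominator_error_upper_bound
    (A B rec Q ε₀ d d₀ d₁ N₀ D₀ F₀ N₁ D₁ F₁ N₂ ε₀' : ℝ)
    (hB : B ≠ 0) (hQ : Q = A / B) (hQpos : 0 < Q) (hQlt : Q < 2)
    (hε : ε₀ = 1 - B * rec)
    (hd : 0 < d) (hd' : d ≤ 2 ^ (-12 : ℤ))
    (hd₀ : 0 ≤ d₀) (hd₀' : d₀ < d)
    (hd₁ : 0 ≤ d₁) (hd₁' : d₁ < d)
    (hε₀' : ε₀' = ε₀ + d₀) (hε₀'_small : |ε₀'| ≤ 2 ^ (-6 : ℤ))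
    (hN₀ : N₀ = A * rec) (hD₀ : D₀ = B * rec - d₀)
    (hF₀ : F₀ = 2 - D₀)
    (hN₁ : N₁ = N₀ * F₀) (hD₁ : D₁ = D₀ * F₀ - d₁)
    (hF₁ : F₁ = 2 - D₁)
    (hN₂ : N₂ = N₁ * F₁) :
    N₂ - Q < (2 * Q + 1) * d := by
  have hA : A = Q * B := by rw [hQ, div_mul_cancel₀ A hB]
  have hBr : B * rec = 1 - ε₀' + d₀ := by rw [hε₀', hε]; ring
  have hAr : A * rec = Q * (1 - ε₀' + d₀) := by rw [hA, mul_assoc, hBr]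
  have key : N₂ = Q * (1 - ε₀' + d₀) * (1 + ε₀') * (1 + ε₀' ^ 2 + d₁) := by
    rw [hN₂, hN₁, hF₁, hD₁, hF₀, hD₀, hN₀, hAr, hBr]; ring
  have he : |ε₀'| ≤ 1/64 := by norm_num at hε₀'_small ⊢; linarith
  have he2 : ε₀' ^ 2 ≤ 1/4096 := by
    nlinarith [abs_nonneg ε₀', sq_abs ε₀', neg_abs_le ε₀', le_abs_self ε₀']
  obtain ⟨h1, h2⟩ := abs_le.mp he
  have hd2 : d ≤ 1/4096 := by norm_num at hd'; linarith
  rw [key]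
  nlinarith [sq_nonneg ε₀', sq_nonneg (ε₀'^2), mul_pos hQpos hd,
    mul_nonneg hQpos.le (sq_nonneg (ε₀'^2)), mul_nonneg hd₀ hd₁,
    mul_nonneg (mul_nonneg hQpos.le hd₀) hd₁, mul_nonneg hQpos.le hd₀,
    mul_nonneg hQpos.le hd₁, mul_nonneg (mul_nonneg hQpos.le hd₀) (sq_nonneg ε₀'),
    mul_nonneg (mul_nonneg hQpos.le hd₁) (sq_nonneg ε₀')]
end

section
/- Numerical bound on the accumulative error term after three iterations: let Q, ulp, F₀, F₁, F₂ and nᵢ (i = 0,…,3), dᵢ (i = 0,…,2) be real numbers with Q > 0, ulp > 0, 1 ≤ F₂ ≤ F₁ ≤ F₀ ≤ 1.0156, 0 ≤ nᵢ < ulp, and 0 ≤ dᵢ < ulp. Define AET(3) = F₀·F₁·F₂·(Q·d₀ - n₀) + F₁·F₂·(Q·d₁ - n₁) + F₂·(Q·d₂ - n₂) - n₃. Then -4.0947·ulp < AET(3) < 3.0947·Q·ulp. -/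
set_option maxHeartbeats 1000000


/-- Numerical bound on the accumulative error term after three iterations. -/
theorem aet3_numerical_bound
    (Q ulp F₀ F₁ F₂ n₀ n₁ n₂ n₃ d₀ d₁ d₂ : ℝ)
    (hQ : 0 < Q) (hulp : 0 < ulp)
    (hF₂ : 1 ≤ F₂) (hF₂₁ : F₂ ≤ F₁) (hF₁₀ : F₁ ≤ F₀) (hF₀ : F₀ ≤ 1.0156)
    (hn₀ : 0 ≤ n₀) (hn₀' : n₀ < ulp)
    (hn₁ : 0 ≤ n₁) (hn₁' : n₁ < ulp)
    (hn₂ : 0 ≤ n₂) (hn₂' : n₂ < ulp)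
    (hn₃ : 0 ≤ n₃) (hn₃' : n₃ < ulp)
    (hd₀ : 0 ≤ d₀) (hd₀' : d₀ < ulp)
    (hd₁ : 0 ≤ d₁) (hd₁' : d₁ < ulp)
    (hd₂ : 0 ≤ d₂) (hd₂' : d₂ < ulp) :
    -4.0947 * ulp
        < F₀ * F₁ * F₂ * (Q * d₀ - n₀) + F₁ * F₂ * (Q * d₁ - n₁)
            + F₂ * (Q * d₂ - n₂) - n₃ ∧
      F₀ * F₁ * F₂ * (Q * d₀ - n₀) + F₁ * F₂ * (Q * d₁ - n₁)
            + F₂ * (Q * d₂ - n₂) - n₃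
        < 3.0947 * Q * ulp := by
  have hF₁1 : 1 ≤ F₁ := hF₂.trans hF₂₁
  have hF₀1 : 1 ≤ F₀ := hF₁1.trans hF₁₀
  have hF₁u : F₁ ≤ 1.0156 := hF₁₀.trans hF₀
  have hF₂u : F₂ ≤ 1.0156 := hF₂₁.trans hF₁u
  have hP2l : 1 ≤ F₁ * F₂ := by nlinarith
  have hP2u : F₁ * F₂ ≤ 1.0315 := by nlinarith
  have hP3l : 1 ≤ F₀ * F₁ * F₂ := by nlinarith
  have hP3u : F₀ * F₁ * F₂ ≤ 1.0476 := by nlinarith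
  have h0 : 0 ≤ Q * d₀ := mul_nonneg hQ.le hd₀
  have h1 : 0 ≤ Q * d₁ := mul_nonneg hQ.le hd₁
  have h2 : 0 ≤ Q * d₂ := mul_nonneg hQ.le hd₂
  have hq0 : Q * d₀ ≤ Q * ulp := by nlinarith
  have hq1 : Q * d₁ ≤ Q * ulp := by nlinarith
  have hq2 : Q * d₂ ≤ Q * ulp := by nlinarith
  constructor
  · nlinarith [mul_le_mul hP3u hn₀'.le hn₀ (by norm_num : (0:ℝ) ≤ (1.0476:ℝ)),
      mul_le_mul hP2u hn₁'.le hn₁ (by norm_num : (0:ℝ) ≤ (1.0315:ℝ)),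
      mul_le_mul hF₂u hn₂'.le hn₂ (by norm_num : (0:ℝ) ≤ (1.0156:ℝ)),
      mul_nonneg (le_trans zero_le_one hP3l) h0,
      mul_nonneg (le_trans zero_le_one hP2l) h1,
      mul_nonneg (le_trans zero_le_one hF₂) h2]
  · nlinarith [mul_le_mul hP3u hq0 h0 (by norm_num : (0:ℝ) ≤ (1.0476:ℝ)),
      mul_le_mul hP2u hq1 h1 (by norm_num : (0:ℝ) ≤ (1.0315:ℝ)),
      mul_le_mul hF₂u hq2 h2 (by norm_num : (0:ℝ) ≤ (1.0156:ℝ)),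
      mul_nonneg (le_trans zero_le_one hP3l) hn₀,
      mul_nonneg (le_trans zero_le_one hP2l) hn₁,
      mul_nonneg (le_trans zero_le_one hF₂) hn₂,
      mul_pos hQ hulp]
end

section
/- Precise form of Lemma 3.1/3.2 (iterative factors have negligible multiplicative effect): let ε₀ be a real number with |ε₀| ≤ 2⁻⁶. Then for all natural numbers i ≤ m, the product of iterative factors satisfies ∏_{j=i}^{m} (1 + ε₀^(2^j)) ≤ 1 + 2⁻⁵. -/
lemma telescope_iter (a : ℝ) : ∀ i m : ℕ, i ≤ m →
    (1 - a ^ (2 ^ i)) * ∏ j ∈ Finset.Icc i m, (1 + a ^ (2 ^ j))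
      = 1 - a ^ (2 ^ (m + 1)) := by
  intro i m
  induction m with
  | zero =>
    intro h
    interval_cases i
    simp
    ring
  | succ m ih =>
    intro h
    rcases Nat.lt_or_ge i (m + 1) with h' | h'
    · have hi : i ≤ m := Nat.lt_succ_iff.mp h'
      rw [Finset.prod_Icc_succ_top (by omega), ← mul_assoc, ih hi,
        show (2 : ℕ) ^ (m + 1 + 1) = 2 ^ (m + 1) * 2 from pow_succ 2 (m + 1),
        pow_mul]
      ring
    · have hi : i = m + 1 := le_antisymm h h'
      subst hi
      rw [Finset.Icc_self, Finset.prod_singleton,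
        show (2 : ℕ) ^ (m + 1 + 1) = 2 ^ (m + 1) * 2 from pow_succ 2 (m + 1),
        pow_mul]
      ring

/-- Precise form of Lemma 3.1/3.2: products of exact iterative factors are at
most `1 + 2⁻⁵` when the initial relative error is at most `2⁻⁶`. -/
theorem product_of_iterative_factors_bound
    (ε₀ : ℝ) (hε : |ε₀| ≤ 2 ^ (-6 : ℤ)) :
    ∀ i m : ℕ, i ≤ m →
      ∏ j ∈ Finset.Icc i m, (1 + ε₀ ^ (2 ^ j)) ≤ 1 + 2 ^ (-5 : ℤ) := by
  intro i m him
  set a := |ε₀| with ha_def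
  have ha0 : 0 ≤ a := abs_nonneg _
  have ha64 : a ≤ 1 / 64 := by
    have : (2 : ℝ) ^ (-6 : ℤ) = 1 / 64 := by norm_num
    linarith [hε, this ▸ hε]
  have ha1 : a ≤ 1 := by linarith
  have step1 : ∏ j ∈ Finset.Icc i m, (1 + ε₀ ^ (2 ^ j))
      ≤ ∏ j ∈ Finset.Icc i m, (1 + a ^ (2 ^ j)) := by
    apply Finset.prod_le_prod
    · intro j _
      have h1 : |ε₀ ^ (2 ^ j)| ≤ 1 := by
        rw [abs_pow]; exact pow_le_one₀ ha0 ha1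
      have := neg_abs_le (ε₀ ^ (2 ^ j))
      linarith
    · intro j _
      have : ε₀ ^ (2 ^ j) ≤ a ^ (2 ^ j) := by
        rw [ha_def, ← abs_pow]; exact le_abs_self _
      linarith
  have hx : a ^ (2 ^ i) ≤ a := by
    calc a ^ (2 ^ i) ≤ a ^ 1 := pow_le_pow_of_le_one ha0 ha1 Nat.one_le_two_pow
    _ = a := pow_one a
  have hxpos : (0 : ℝ) < 1 - a ^ (2 ^ i) := by nlinarith
  have hy : 0 ≤ a ^ (2 ^ (m + 1)) := pow_nonneg ha0 _
  have ht := telescope_iter a i m him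
  have hP : ∏ j ∈ Finset.Icc i m, (1 + a ^ (2 ^ j))
      = (1 - a ^ (2 ^ (m + 1))) / (1 - a ^ (2 ^ i)) := by
    field_simp
    linarith [ht]
  have hbound : ∏ j ∈ Finset.Icc i m, (1 + a ^ (2 ^ j)) ≤ 33 / 32 := by
    rw [hP, div_le_iff₀ hxpos]
    nlinarith
  calc ∏ j ∈ Finset.Icc i m, (1 + ε₀ ^ (2 ^ j)) ≤ 33 / 32 := le_trans step1 hbound
  _ = 1 + 2 ^ (-5 : ℤ) := by norm_num
end
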